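/- Fix N ≥ 2. Then ∑_{j = 0}^{N−1} (if N ≤ 2·j and j ∈ P_{2,N} then (1/2)·τ_N(j) else 0) = 1/N, as real numbers. That is, the total weight assigned by the instantiated occupation invariant of the Fast Dice Roller to the terminating states equals 1/N. -/

import Mathlib

open scoped Classical

/-- `F N i`: the least `k` with `2^k ≡ i (mod N)`, or `∞` if no such `k` exists. -/
noncomputable def F (N i : ℕ) : ℕ∞ :=
  sInf {k : ℕ∞ | ∃ m : ℕ, k = (m : ℕ∞) ∧ 2 ^ m ≡ i [MOD N]}

/-- `L N i`: the least `l ≥ 1` with `i·2^l ≡ i (mod N)`, or `∞` if no such `l` exists. -/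
noncomputable def L (N i : ℕ) : ℕ∞ :=
  sInf {k : ℕ∞ | ∃ l : ℕ, k = (l : ℕ∞) ∧ 1 ≤ l ∧ i * 2 ^ l ≡ i [MOD N]}

/-- `P2 N`: the set of residues of powers of two modulo `N`. -/
def P2 (N : ℕ) : Set ℕ := {i : ℕ | ∃ k : ℕ, 2 ^ k ≡ i [MOD N]}

/-- The instantiation `τ_N(i) = (1/2)^{F_N(i)} · (1 − (1/2)^{L_N(i)})⁻¹` (with the second
factor equal to `1` when `L_N(i) = ∞`). -/
noncomputable def tau (N i : ℕ) : ℝ :=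
  if L N i = ⊤ then (1 / 2 : ℝ) ^ (F N i).toNat
  else (1 / 2 : ℝ) ^ (F N i).toNat * (1 - (1 / 2 : ℝ) ^ (L N i).toNat)⁻¹

section Aux

variable {N j : ℕ}

lemma F_eq (h : ∃ k : ℕ, 2 ^ k ≡ j [MOD N]) : F N j = (Nat.find h : ℕ∞) := by
  apply le_antisymm
  · exact sInf_le ⟨Nat.find h, rfl, Nat.find_spec h⟩
  · apply le_sInf
    rintro x ⟨m, rfl, hm⟩
    exact_mod_cast Nat.find_min' h hm

lemma L_eq (h : ∃ l : ℕ, 1 ≤ l ∧ j * 2 ^ l ≡ j [MOD N]) : L N j = (Nat.find h : ℕ∞) := by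
  apply le_antisymm
  · exact sInf_le ⟨Nat.find h, rfl, (Nat.find_spec h)⟩
  · apply le_sInf
    rintro x ⟨m, rfl, hm⟩
    exact_mod_cast Nat.find_min' h hm

lemma L_top (h : ¬ ∃ l : ℕ, 1 ≤ l ∧ j * 2 ^ l ≡ j [MOD N]) : L N j = ⊤ := by
  have : {k : ℕ∞ | ∃ l : ℕ, k = (l : ℕ∞) ∧ 1 ≤ l ∧ j * 2 ^ l ≡ j [MOD N]} = ∅ := by
    apply Set.eq_empty_iff_forall_notMem.2
    rintro x ⟨l, rfl, h1, h2⟩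
    exact h ⟨l, h1, h2⟩
  rw [L, this, sInf_empty]

lemma subCycle {l l' : ℕ} (hle : l ≤ l') (h1 : j * 2 ^ l ≡ j [MOD N])
    (h2 : j * 2 ^ l' ≡ j [MOD N]) : j * 2 ^ (l' - l) ≡ j [MOD N] := by
  have e : j * 2 ^ l * 2 ^ (l' - l) = j * 2 ^ l' := by
    rw [mul_assoc, ← pow_add, Nat.add_sub_cancel' hle]
  calc j * 2 ^ (l' - l) ≡ j * 2 ^ l * 2 ^ (l' - l) [MOD N] := (h1.mul_right _).symm
    _ = j * 2 ^ l' := e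
    _ ≡ j [MOD N] := h2

lemma L_dvd (hD : ∃ l : ℕ, 1 ≤ l ∧ j * 2 ^ l ≡ j [MOD N]) :
    ∀ l : ℕ, j * 2 ^ l ≡ j [MOD N] → Nat.find hD ∣ l := by
  intro l
  induction l using Nat.strong_induction_on with
  | _ l ih =>
    intro hl
    rcases Nat.eq_zero_or_pos l with h0 | h1
    · simp [h0]
    · have hle : Nat.find hD ≤ l := Nat.find_min' hD ⟨h1, hl⟩
      have hL1 : 1 ≤ Nat.find hD := (Nat.find_spec hD).1
      have hsub := subCycle hle (Nat.find_spec hD).2 hl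
      obtain ⟨t, ht⟩ := ih (l - Nat.find hD) (by omega) hsub
      exact ⟨t + 1, by rw [Nat.mul_add, Nat.mul_one]; omega⟩

lemma cyc_mul (hD : ∃ l : ℕ, 1 ≤ l ∧ j * 2 ^ l ≡ j [MOD N]) :
    ∀ t : ℕ, j * 2 ^ (t * Nat.find hD) ≡ j [MOD N] := by
  intro t
  induction t with
  | zero => simpa using Nat.ModEq.refl j
  | succ t ih =>
    have e : j * 2 ^ ((t + 1) * Nat.find hD) = j * 2 ^ (t * Nat.find hD) * 2 ^ Nat.find hD := by
      rw [mul_assoc, ← pow_add, add_mul, one_mul]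
    calc j * 2 ^ ((t + 1) * Nat.find hD)
        = j * 2 ^ (t * Nat.find hD) * 2 ^ Nat.find hD := e
      _ ≡ j * 2 ^ Nat.find hD [MOD N] := ih.mul_right _
      _ ≡ j [MOD N] := (Nat.find_spec hD).2

lemma shift_mem (h : ∃ k : ℕ, 2 ^ k ≡ j [MOD N]) {k : ℕ} (hk : 2 ^ k ≡ j [MOD N]) :
    j * 2 ^ (k - Nat.find h) ≡ j [MOD N] := by
  have hle : Nat.find h ≤ k := Nat.find_min' h hk
  calc j * 2 ^ (k - Nat.find h)
      ≡ 2 ^ Nat.find h * 2 ^ (k - Nat.find h) [MOD N] := (Nat.find_spec h).symm.mul_right _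
    _ = 2 ^ k := by rw [← pow_add, Nat.add_sub_cancel' hle]
    _ ≡ j [MOD N] := hk

lemma pk_iff (h : ∃ k : ℕ, 2 ^ k ≡ j [MOD N])
    (hD : ∃ l : ℕ, 1 ≤ l ∧ j * 2 ^ l ≡ j [MOD N]) (k : ℕ) :
    2 ^ k ≡ j [MOD N] ↔ ∃ t : ℕ, k = Nat.find h + t * Nat.find hD := by
  constructor
  · intro hk
    have hle : Nat.find h ≤ k := Nat.find_min' h hk
    obtain ⟨t, ht⟩ := L_dvd hD _ (shift_mem h hk)
    exact ⟨t, by rw [mul_comm]; omega⟩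
  · rintro ⟨t, rfl⟩
    calc 2 ^ (Nat.find h + t * Nat.find hD)
        = 2 ^ Nat.find h * 2 ^ (t * Nat.find hD) := pow_add 2 _ _
      _ ≡ j * 2 ^ (t * Nat.find hD) [MOD N] := (Nat.find_spec h).mul_right _
      _ ≡ j [MOD N] := cyc_mul hD t

lemma pk_iff_top (h : ∃ k : ℕ, 2 ^ k ≡ j [MOD N])
    (hD : ¬ ∃ l : ℕ, 1 ≤ l ∧ j * 2 ^ l ≡ j [MOD N]) (k : ℕ) :
    2 ^ k ≡ j [MOD N] ↔ k = Nat.find h := by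
  constructor
  · intro hk
    by_contra hne
    have hle : Nat.find h ≤ k := Nat.find_min' h hk
    exact hD ⟨k - Nat.find h, by omega, shift_mem h hk⟩
  · rintro rfl; exact Nat.find_spec h

lemma tau_eq_tsum (hj : j < N) (h : ∃ k : ℕ, 2 ^ k ≡ j [MOD N]) :
    tau N j = ∑' k : ℕ, (if 2 ^ k % N = j then (1 / 2 : ℝ) ^ k else 0) := by
  have hmod : ∀ k : ℕ, (2 ^ k % N = j) ↔ 2 ^ k ≡ j [MOD N] := by
    intro k; rw [Nat.ModEq, Nat.mod_eq_of_lt hj]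
  by_cases hD : ∃ l : ℕ, 1 ≤ l ∧ j * 2 ^ l ≡ j [MOD N]
  · have hL1 : 1 ≤ Nat.find hD := (Nat.find_spec hD).1
    have hLne : L N j ≠ ⊤ := by rw [L_eq hD]; exact ENat.coe_ne_top _
    rw [tau, if_neg hLne, L_eq hD, F_eq h]
    simp only [ENat.toNat_coe]
    have hinj : Function.Injective (fun t : ℕ => Nat.find h + t * Nat.find hD) := by
      intro a b hab
      simp only [add_right_inj] at hab
      exact Nat.eq_of_mul_eq_mul_right (by omega) hab
    rw [← Function.Injective.tsum_eq hinj ?hz]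
    case hz =>
      intro x hx
      rw [Function.mem_support] at hx
      have hc : 2 ^ x % N = j := by
        by_contra hc; exact hx (if_neg hc)
      obtain ⟨t, ht⟩ := (pk_iff h hD x).1 ((hmod x).1 hc)
      exact ⟨t, ht.symm⟩
    have hterm : ∀ t : ℕ,
        (if 2 ^ (Nat.find h + t * Nat.find hD) % N = j then
          (1 / 2 : ℝ) ^ (Nat.find h + t * Nat.find hD) else 0)
        = (1 / 2 : ℝ) ^ Nat.find h * ((1 / 2 : ℝ) ^ Nat.find hD) ^ t := by
      intro t
      rw [if_pos ((hmod _).2 ((pk_iff h hD _).2 ⟨t, rfl⟩))]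
      rw [pow_add, mul_comm t (Nat.find hD), pow_mul]
    symm
    calc (∑' t : ℕ, if 2 ^ (Nat.find h + t * Nat.find hD) % N = j then
            (1 / 2 : ℝ) ^ (Nat.find h + t * Nat.find hD) else 0)
        = ∑' t : ℕ, (1 / 2 : ℝ) ^ Nat.find h * ((1 / 2 : ℝ) ^ Nat.find hD) ^ t := by
          exact tsum_congr hterm
      _ = (1 / 2 : ℝ) ^ Nat.find h * ∑' t : ℕ, ((1 / 2 : ℝ) ^ Nat.find hD) ^ t :=
          tsum_mul_left
      _ = (1 / 2 : ℝ) ^ Nat.find h * (1 - (1 / 2 : ℝ) ^ Nat.find hD)⁻¹ := by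
          rw [tsum_geometric_of_lt_one (by positivity)
            (pow_lt_one₀ (by norm_num) (by norm_num) (by omega))]
  · rw [tau, if_pos (L_top hD), F_eq h]
    simp only [ENat.toNat_coe]
    symm
    rw [tsum_eq_single (Nat.find h)]
    · rw [if_pos ((hmod _).2 (Nat.find_spec h))]
    · intro b hb
      rw [if_neg]
      intro hc
      exact hb ((pk_iff_top h hD b).1 ((hmod b).1 hc))

lemma digit_sum (N : ℕ) (hN : 2 ≤ N) :
    (∑' k : ℕ, (if N ≤ 2 * (2 ^ k % N) then (1 / 2 : ℝ) ^ (k + 1) else 0)) = 1 / N := by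
  set f : ℕ → ℝ := fun k => if N ≤ 2 * (2 ^ k % N) then (1 / 2 : ℝ) ^ (k + 1) else 0 with hf
  set g : ℕ → ℝ := fun k => (2 ^ k / N : ℕ) / 2 ^ k with hg
  have hNpos : 0 < N := by omega
  -- key digit recursion
  have hdig : ∀ k : ℕ, 2 ^ (k + 1) / N
      = 2 * (2 ^ k / N) + (if N ≤ 2 * (2 ^ k % N) then 1 else 0) := by
    intro k
    have hmod : 2 ^ k % N < N := Nat.mod_lt _ hNpos
    have hdm : N * (2 ^ k / N) + 2 ^ k % N = 2 ^ k := Nat.div_add_mod _ _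
    have e1 : 2 ^ (k + 1) = N * (2 * (2 ^ k / N)) + 2 * (2 ^ k % N) := by
      conv_lhs => rw [pow_succ, mul_comm, ← hdm]
      ring
    rw [e1, Nat.mul_add_div hNpos]
    by_cases hc : N ≤ 2 * (2 ^ k % N)
    · have h1 : 2 * (2 ^ k % N) / N = 1 := Nat.div_eq_of_lt_le (by omega) (by omega)
      rw [if_pos hc, h1]
    · have h0 : 2 * (2 ^ k % N) / N = 0 := Nat.div_eq_of_lt (by omega)
      rw [if_neg hc, h0]
  have hstep : ∀ k : ℕ, f k = g (k + 1) - g k := by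
    intro k
    have := hdig k
    by_cases hc : N ≤ 2 * (2 ^ k % N)
    · rw [if_pos hc] at this
      simp only [hf, hg, if_pos hc]
      rw [this]
      push_cast
      rw [pow_succ]
      field_simp
      have h2k : ((1 : ℝ) / 2) ^ k * 2 ^ k = 1 := by rw [← mul_pow]; norm_num
      linear_combination (2 * 2 ^ k : ℝ) * h2k
    · rw [if_neg hc, add_zero] at this
      simp only [hf, hg, if_neg hc]
      rw [this]
      push_cast
      rw [pow_succ]
      field_simp
      ring
  have hpart : ∀ M : ℕ, ∑ k ∈ Finset.range M, f k = g M := by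
    intro M
    have := Finset.sum_range_sub g M
    calc ∑ k ∈ Finset.range M, f k = ∑ k ∈ Finset.range M, (g (k + 1) - g k) :=
          Finset.sum_congr rfl fun k _ => hstep k
      _ = g M - g 0 := Finset.sum_range_sub g M
      _ = g M := by
          have h0 : (2 ^ 0 / N : ℕ) = 0 := Nat.div_eq_of_lt (by omega)
          simp only [hg, h0]
          simp
  have hgval : ∀ M : ℕ, g M = 1 / N - (2 ^ M % N : ℕ) / (N * 2 ^ M) := by
    intro M
    have hdm : N * (2 ^ M / N) + 2 ^ M % N = 2 ^ M := Nat.div_add_mod _ _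
    have hdm' : ((N : ℝ) * (2 ^ M / N : ℕ) + (2 ^ M % N : ℕ)) = 2 ^ M := by
      exact_mod_cast congrArg (Nat.cast : ℕ → ℝ) hdm
    simp only [hg]
    have hNne : (N : ℝ) ≠ 0 := by positivity
    have h2ne : (2 : ℝ) ^ M ≠ 0 := by positivity
    field_simp
    linear_combination hdm'
  have htend : Filter.Tendsto g Filter.atTop (nhds (1 / N)) := by
    have h0 : Filter.Tendsto (fun M : ℕ => ((2 ^ M % N : ℕ) : ℝ) / (N * 2 ^ M))
        Filter.atTop (nhds 0) := by
      apply squeeze_zero (fun M => by positivity) (g := fun M : ℕ => (1 / 2 : ℝ) ^ M)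
      · intro M
        have h1 : ((2 ^ M % N : ℕ) : ℝ) ≤ N := by
          exact_mod_cast (Nat.mod_lt _ hNpos).le
        have e2 : ((1 : ℝ) / 2) ^ M * ((N : ℝ) * 2 ^ M) = N := by
          have e : ((1 : ℝ) / 2) ^ M * 2 ^ M = 1 := by
            rw [← mul_pow]; norm_num
          calc ((1 : ℝ) / 2) ^ M * ((N : ℝ) * 2 ^ M)
              = (N : ℝ) * (((1 : ℝ) / 2) ^ M * 2 ^ M) := by ring
            _ = N := by rw [e, mul_one]
        rw [div_le_iff₀ (by positivity), e2]
        exact h1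
      · exact tendsto_pow_atTop_nhds_zero_of_lt_one (by norm_num) (by norm_num)
    have := Filter.Tendsto.sub (tendsto_const_nhds (x := (1 / N : ℝ))) h0
    rw [sub_zero] at this
    exact this.congr fun M => (hgval M).symm
  have hHasSum : HasSum f (1 / N) := by
    rw [hasSum_iff_tendsto_nat_of_nonneg (fun k => by simp only [hf]; positivity)]
    exact htend.congr fun M => (hpart M).symm
  exact hHasSum.tsum_eq

/-- The total weight assigned by the instantiated occupation invariant of the Fast Dice
Roller to the terminating states equals `1/N`. -/
theorem tau_terminating_mass (N : ℕ) (hN : 2 ≤ N) :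
    (∑ j ∈ Finset.range N,
        if N ≤ 2 * j ∧ j ∈ P2 N then (1 / 2 : ℝ) * tau N j else 0) = 1 / N := by
  have hNpos : 0 < N := by omega
  have hsummable : ∀ j : ℕ, Summable (fun k : ℕ =>
      if 2 ^ k % N = j ∧ N ≤ 2 * j then (1 / 2 : ℝ) ^ (k + 1) else 0) := by
    intro j
    have hb : Summable (fun k : ℕ => (1 / 2 : ℝ) ^ (k + 1)) := by
      have hgeo : Summable (fun k : ℕ => (1 / 2 : ℝ) ^ k) :=
        summable_geometric_of_lt_one (by norm_num) (by norm_num)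
      exact (summable_nat_add_iff 1).2 hgeo
    refine Summable.of_nonneg_of_le (fun k => ?_) (fun k => ?_) hb
    · split_ifs
      · positivity
      · exact le_rfl
    · split_ifs
      · exact le_rfl
      · positivity
  have key : ∀ j ∈ Finset.range N,
      (if N ≤ 2 * j ∧ j ∈ P2 N then (1 / 2 : ℝ) * tau N j else 0)
        = ∑' k : ℕ, (if 2 ^ k % N = j ∧ N ≤ 2 * j then (1 / 2 : ℝ) ^ (k + 1) else 0) := by
    intro j hjmem
    have hjlt : j < N := Finset.mem_range.1 hjmem
    by_cases hc : N ≤ 2 * j ∧ j ∈ P2 N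
    · rw [if_pos hc, tau_eq_tsum hjlt hc.2, ← tsum_mul_left]
      apply tsum_congr
      intro k
      by_cases hk : 2 ^ k % N = j
      · rw [if_pos hk, if_pos ⟨hk, hc.1⟩, pow_succ]
        ring
      · rw [if_neg hk, if_neg (fun hcc => hk hcc.1), mul_zero]
    · rw [if_neg hc]
      symm
      have hz : ∀ k : ℕ,
          (if 2 ^ k % N = j ∧ N ≤ 2 * j then (1 / 2 : ℝ) ^ (k + 1) else 0) = 0 := by
        intro k
        rw [if_neg]
        rintro ⟨hk, hle⟩
        apply hc
        refine ⟨hle, ⟨k, ?_⟩⟩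
        rwa [Nat.ModEq, Nat.mod_eq_of_lt hjlt]
      calc (∑' k : ℕ, if 2 ^ k % N = j ∧ N ≤ 2 * j then (1 / 2 : ℝ) ^ (k + 1) else 0)
          = ∑' _ : ℕ, (0 : ℝ) := tsum_congr hz
        _ = 0 := tsum_zero
  rw [Finset.sum_congr rfl key, ← Summable.tsum_finsetSum (fun j _ => hsummable j)]
  have inner : ∀ k : ℕ, (∑ j ∈ Finset.range N,
      if 2 ^ k % N = j ∧ N ≤ 2 * j then (1 / 2 : ℝ) ^ (k + 1) else 0)
      = (if N ≤ 2 * (2 ^ k % N) then (1 / 2 : ℝ) ^ (k + 1) else 0) := by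
    intro k
    rw [Finset.sum_eq_single (2 ^ k % N)]
    · by_cases hc : N ≤ 2 * (2 ^ k % N)
      · rw [if_pos ⟨rfl, hc⟩, if_pos hc]
      · rw [if_neg (fun h => hc h.2), if_neg hc]
    · intro b _ hb
      rw [if_neg (fun h => hb h.1.symm)]
    · intro habs
      exact absurd (Finset.mem_range.2 (Nat.mod_lt _ hNpos)) habs
  calc (∑' k : ℕ, ∑ j ∈ Finset.range N,
        if 2 ^ k % N = j ∧ N ≤ 2 * j then (1 / 2 : ℝ) ^ (k + 1) else 0)
      = ∑' k : ℕ, (if N ≤ 2 * (2 ^ k % N) then (1 / 2 : ℝ) ^ (k + 1) else 0) :=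
        tsum_congr inner
    _ = 1 / N := digit_sum N hN
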